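/- arXiv:2009.07450 — 2 statements merged into one kernel-verified Lean document; each statement's English description precedes it below -/
import Mathlib

section
/- Let ψ, φ be orthogonal unit vectors in H = ℂ² ⊗ H', and let A be a unitary on H. Write A ψ = √p |1⟩ψ₁ + √(1−p) |0⟩ψ₀ and A φ = √(1−p+Δ) |0⟩φ₀ + √(p−Δ) |1⟩φ₁ where ψ₀, ψ₁, φ₀, φ₁ are unit vectors in H', 0 ≤ Δ ≤ p ≤ 1, and 1−p+Δ ≤ 1. Define x = (ψ+φ)/√2, y = (ψ−φ)/√2 and U = A† Z₁ A where Z₁ = Z ⊗ I. Then |⟨y, U x⟩ + ⟨x, U y⟩| / 2 = Δ. -/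
open scoped InnerProductSpace

noncomputable section

/-- The elementary tensor of a qubit state with a state of `ℂ^N`, inside
`ℂ² ⊗ ℂ^N ≅ EuclideanSpace ℂ (Fin 2 × Fin N)`. -/
def tensor {N : ℕ} (a : EuclideanSpace ℂ (Fin 2)) (b : EuclideanSpace ℂ (Fin N)) :
    EuclideanSpace ℂ (Fin 2 × Fin N) :=
  WithLp.toLp 2 (fun p => a p.1 * b p.2)

/-- The qubit basis state `|0⟩`. -/
def ket0 : EuclideanSpace ℂ (Fin 2) := EuclideanSpace.single 0 1

/-- The qubit basis state `|1⟩`. -/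
def ket1 : EuclideanSpace ℂ (Fin 2) := EuclideanSpace.single 1 1

/-- Pauli `Z` on the first qubit: `Z ⊗ I`. -/
def Z1 {N : ℕ} (v : EuclideanSpace ℂ (Fin 2 × Fin N)) :
    EuclideanSpace ℂ (Fin 2 × Fin N) :=
  WithLp.toLp 2 (fun p => (if p.1 = 0 then (1 : ℂ) else -1) * v p)

lemma Z1_add {N : ℕ} (u v : EuclideanSpace ℂ (Fin 2 × Fin N)) :
    Z1 (u + v) = Z1 u + Z1 v := by
  ext q; simp [Z1]; split <;> ring

lemma Z1_smul {N : ℕ} (c : ℂ) (v : EuclideanSpace ℂ (Fin 2 × Fin N)) :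
    Z1 (c • v) = c • Z1 v := by
  ext q; simp [Z1]

lemma Z1_tensor0 {N : ℕ} (a : EuclideanSpace ℂ (Fin N)) :
    Z1 (tensor ket0 a) = tensor ket0 a := by
  ext q
  rcases q with ⟨i, j⟩
  fin_cases i <;> simp [Z1, tensor, ket0, EuclideanSpace.single_apply]

lemma Z1_tensor1 {N : ℕ} (a : EuclideanSpace ℂ (Fin N)) :
    Z1 (tensor ket1 a) = -tensor ket1 a := by
  ext q
  rcases q with ⟨i, j⟩
  fin_cases i <;> simp [Z1, tensor, ket1, EuclideanSpace.single_apply]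

lemma Z1_sub {N : ℕ} (u v : EuclideanSpace ℂ (Fin 2 × Fin N)) :
    Z1 (u - v) = Z1 u - Z1 v := by
  ext q; simp [Z1]; split <;> ring

lemma inner_tensor {N : ℕ} (a b : EuclideanSpace ℂ (Fin 2)) (x y : EuclideanSpace ℂ (Fin N)) :
    ⟪tensor a x, tensor b y⟫_ℂ = ⟪a, b⟫_ℂ * ⟪x, y⟫_ℂ := by
  simp only [PiLp.inner_apply, RCLike.inner_apply, tensor]
  rw [Fintype.sum_prod_type, Finset.sum_mul_sum]
  congr 1; funext i; congr 1; funext j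
  simp [map_mul]; ring

lemma inner00 : ⟪ket0, ket0⟫_ℂ = 1 := by
  simp [ket0, EuclideanSpace.inner_single_left, EuclideanSpace.single_apply]
lemma inner11 : ⟪ket1, ket1⟫_ℂ = 1 := by
  simp [ket1, EuclideanSpace.inner_single_left, EuclideanSpace.single_apply]
lemma inner01 : ⟪ket0, ket1⟫_ℂ = 0 := by
  simp [ket0, ket1, EuclideanSpace.inner_single_left, EuclideanSpace.single_apply]
lemma inner10 : ⟪ket1, ket0⟫_ℂ = 0 := by
  simp [ket0, ket1, EuclideanSpace.inner_single_left, EuclideanSpace.single_apply]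

/-- If a unitary `A` distinguishes the orthogonal unit vectors `ψ, φ` with
bias `Δ` (accepting `ψ` with probability `p` and `φ` with probability `p - Δ`, where
"accepting" means measuring `|1⟩` on the first qubit), then `U = A† Z₁ A` satisfies
`|⟨y, U x⟩ + ⟨x, U y⟩| / 2 = Δ` for `x = (ψ+φ)/√2`, `y = (ψ-φ)/√2`. -/
theorem approx_distinguisher_gives_approx_swap {N : ℕ}
    (ψ φ : EuclideanSpace ℂ (Fin 2 × Fin N))
    (hψ : ‖ψ‖ = 1) (hφ : ‖φ‖ = 1) (hψφ : ⟪ψ, φ⟫_ℂ = 0)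
    (A : EuclideanSpace ℂ (Fin 2 × Fin N) ≃ₗᵢ[ℂ] EuclideanSpace ℂ (Fin 2 × Fin N))
    (p Δ : ℝ) (hΔ0 : 0 ≤ Δ) (hΔp : Δ ≤ p) (hp1 : p ≤ 1) (hpΔ : 1 - p + Δ ≤ 1)
    (ψ0 ψ1 φ0 φ1 : EuclideanSpace ℂ (Fin N))
    (hψ0 : ‖ψ0‖ = 1) (hψ1 : ‖ψ1‖ = 1) (hφ0 : ‖φ0‖ = 1) (hφ1 : ‖φ1‖ = 1)
    (hAψ : A ψ = (Real.sqrt p : ℂ) • tensor ket1 ψ1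
                  + (Real.sqrt (1 - p) : ℂ) • tensor ket0 ψ0)
    (hAφ : A φ = (Real.sqrt (1 - p + Δ) : ℂ) • tensor ket0 φ0
                  + (Real.sqrt (p - Δ) : ℂ) • tensor ket1 φ1)
    (x y : EuclideanSpace ℂ (Fin 2 × Fin N))
    (hx : x = ((Real.sqrt 2 : ℂ))⁻¹ • (ψ + φ))
    (hy : y = ((Real.sqrt 2 : ℂ))⁻¹ • (ψ - φ))
    (U : EuclideanSpace ℂ (Fin 2 × Fin N) → EuclideanSpace ℂ (Fin 2 × Fin N))
    (hU : U = fun v => A.symm (Z1 (A v))) :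
    ‖⟪y, U x⟫_ℂ + ⟪x, U y⟫_ℂ‖ / 2 = Δ := by
  have hp0 : (0 : ℝ) ≤ p := le_trans hΔ0 hΔp
  -- inner self of unit vectors
  have hself : ∀ v : EuclideanSpace ℂ (Fin N), ‖v‖ = 1 → ⟪v, v⟫_ℂ = 1 := by
    intro v hv
    rw [inner_self_eq_norm_sq_to_K, hv]; norm_num
  -- key diagonal computations
  have key1 : ⟪A ψ, Z1 (A ψ)⟫_ℂ = ((1 - 2 * p : ℝ) : ℂ) := by
    rw [hAψ, Z1_add, Z1_smul, Z1_smul, Z1_tensor0, Z1_tensor1]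
    simp only [inner_add_left, inner_add_right, inner_smul_left, inner_smul_right,
      inner_neg_right, inner_tensor, inner00, inner11, inner01, inner10,
      hself _ hψ1, hself _ hψ0, Complex.conj_ofReal]
    have e1 : ((Real.sqrt p : ℂ)) * (Real.sqrt p : ℂ) = (p : ℂ) := by
      rw [← Complex.ofReal_mul, Real.mul_self_sqrt hp0]
    have e2 : ((Real.sqrt (1 - p) : ℂ)) * (Real.sqrt (1 - p) : ℂ) = ((1 - p : ℝ) : ℂ) := by
      rw [← Complex.ofReal_mul, Real.mul_self_sqrt (by linarith)]
    push_cast at e1 e2 ⊢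
    linear_combination e2 - e1
  have key2 : ⟪A φ, Z1 (A φ)⟫_ℂ = ((1 - 2 * p + 2 * Δ : ℝ) : ℂ) := by
    rw [hAφ, Z1_add, Z1_smul, Z1_smul, Z1_tensor0, Z1_tensor1]
    simp only [inner_add_left, inner_add_right, inner_smul_left, inner_smul_right,
      inner_neg_right, inner_tensor, inner00, inner11, inner01, inner10,
      hself _ hφ1, hself _ hφ0, Complex.conj_ofReal]
    have e1 : ((Real.sqrt (1 - p + Δ) : ℂ)) * (Real.sqrt (1 - p + Δ) : ℂ) = ((1 - p + Δ : ℝ) : ℂ) := by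
      rw [← Complex.ofReal_mul, Real.mul_self_sqrt (by linarith)]
    have e2 : ((Real.sqrt (p - Δ) : ℂ)) * (Real.sqrt (p - Δ) : ℂ) = ((p - Δ : ℝ) : ℂ) := by
      rw [← Complex.ofReal_mul, Real.mul_self_sqrt (by linarith)]
    push_cast at e1 e2 ⊢
    linear_combination e1 - e2
  -- reduce to A-side inner products
  have hyx : ⟪y, U x⟫_ℂ = ⟪A y, Z1 (A x)⟫_ℂ := by
    rw [hU]
    simpa using (A.inner_map_map y (A.symm (Z1 (A x)))).symm
  have hxy : ⟪x, U y⟫_ℂ = ⟪A x, Z1 (A y)⟫_ℂ := by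
    rw [hU]
    simpa using (A.inner_map_map x (A.symm (Z1 (A y)))).symm
  have hAx : A x = ((Real.sqrt 2 : ℂ))⁻¹ • (A ψ + A φ) := by
    rw [hx, map_smul, map_add]
  have hAy : A y = ((Real.sqrt 2 : ℂ))⁻¹ • (A ψ - A φ) := by
    rw [hy, map_smul, map_sub]
  have h2 : ((Real.sqrt 2 : ℂ))⁻¹ ≠ 0 := by
    simp [Real.sqrt_eq_zero']
  have hc : (starRingEnd ℂ) ((Real.sqrt 2 : ℂ))⁻¹ * ((Real.sqrt 2 : ℂ))⁻¹ = (1 / 2 : ℂ) := by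
    rw [map_inv₀, Complex.conj_ofReal, ← mul_inv, ← Complex.ofReal_mul,
      Real.mul_self_sqrt (by norm_num)]
    norm_num
  have total : ⟪y, U x⟫_ℂ + ⟪x, U y⟫_ℂ = ((-(2 * Δ) : ℝ) : ℂ) := by
    rw [hyx, hxy, hAx, hAy]
    simp only [Z1_smul, Z1_add, Z1_sub, inner_smul_left, inner_smul_right,
      inner_add_left, inner_add_right, inner_sub_left, inner_sub_right]
    push_cast at key1 key2 ⊢
    linear_combination (2 * (starRingEnd ℂ) ((Real.sqrt 2:ℂ))⁻¹ * ((Real.sqrt 2:ℂ))⁻¹) * key1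
      - (2 * (starRingEnd ℂ) ((Real.sqrt 2:ℂ))⁻¹ * ((Real.sqrt 2:ℂ))⁻¹) * key2
      + (2*((1:ℂ)-2*(p:ℂ)) - 2*((1:ℂ)-2*(p:ℂ)+2*(Δ:ℂ))) * hc
  rw [total, Complex.norm_real, Real.norm_eq_abs, abs_of_nonpos (by linarith)]
  ring


end
end

section
/- If a unitary C satisfies |⟨x, C y⟩ + ⟨y, C x⟩|/2 ≥ 1 − ε for orthogonal unit vectors x, y, then |⟨y, C x⟩|² ≥ (1 − 2ε)², i.e., C approximately maps x to y. In particular, swap complexity dominates relative complexity: any circuit achieving swap error ε achieves mapping fidelity at least (1 − 2ε)². -/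
open scoped InnerProductSpace

/-- If a unitary `C` achieves swap error `ε ≤ 1/2` on the orthogonal unit
vectors `x, y`, i.e. `|⟨x, C y⟩ + ⟨y, C x⟩| / 2 ≥ 1 - ε`, then `C` approximately maps `x`
to `y`: `|⟨y, C x⟩|² ≥ (1 - 2ε)²`. Hence swap complexity dominates relative complexity. -/
theorem swap_dominates_map
    {H : Type*} [NormedAddCommGroup H] [InnerProductSpace ℂ H]
    (x y : H) (hx : ‖x‖ = 1) (hy : ‖y‖ = 1) (hxy : ⟪x, y⟫_ℂ = 0)
    (C : H ≃ₗᵢ[ℂ] H) (ε : ℝ) (hε0 : 0 ≤ ε) (hε : ε ≤ 1 / 2)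
    (hswap : 1 - ε ≤ ‖⟪x, C y⟫_ℂ + ⟪y, C x⟫_ℂ‖ / 2) :
    (1 - 2 * ε) ^ 2 ≤ ‖⟪y, C x⟫_ℂ‖ ^ 2 := by
  have h1 : ‖⟪x, C y⟫_ℂ‖ ≤ 1 := by
    calc ‖⟪x, C y⟫_ℂ‖ ≤ ‖x‖ * ‖C y‖ := norm_inner_le_norm x (C y)
    _ = 1 := by rw [C.norm_map, hx, hy]; ring
  have h2 : 1 - 2 * ε ≤ ‖⟪y, C x⟫_ℂ‖ := by
    have := norm_add_le ⟪x, C y⟫_ℂ ⟪y, C x⟫_ℂ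
    linarith
  have h3 : (0:ℝ) ≤ 1 - 2 * ε := by linarith
  exact pow_le_pow_left₀ h3 h2 2
end
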